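/- The Mills ratio of the standard normal distribution is log-convex: the function x ↦ log R(x) is convex on ℝ. -/

import Mathlib

open MeasureTheory Real Set

/-- The Mills ratio of the standard normal distribution:
`R(x) = e^{x²/2} ∫_x^∞ e^{-t²/2} dt`. -/
noncomputable def millsRatio (x : ℝ) : ℝ :=
  Real.exp (x ^ 2 / 2) * ∫ t in Set.Ioi x, Real.exp (-t ^ 2 / 2)

lemma integrable_aux (x : ℝ) :
    Integrable (fun s : ℝ => Real.exp (-(x * s) - s ^ 2 / 2))
      (volume.restrict (Set.Ioi 0)) := by
  have h : (fun s : ℝ => Real.exp (-(x * s) - s ^ 2 / 2)) =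
      fun s : ℝ => Real.exp (x ^ 2 / 2) * Real.exp (-(2⁻¹ : ℝ) * (s + x) ^ 2) := by
    funext s
    rw [← Real.exp_add]
    ring_nf
  rw [h]
  exact ((((integrable_exp_neg_mul_sq (by norm_num : (0:ℝ) < 2⁻¹)).comp_add_right
    x)).const_mul _).restrict

lemma millsRatio_eq (x : ℝ) :
    millsRatio x = ∫ s in Set.Ioi 0, Real.exp (-(x * s) - s ^ 2 / 2) := by
  have h1 : (∫ t in Set.Ioi x, Real.exp (-t ^ 2 / 2))
      = ∫ s in Set.Ioi 0, Real.exp (-(s + x) ^ 2 / 2) := by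
    rw [← integral_indicator measurableSet_Ioi, ← integral_indicator measurableSet_Ioi]
    rw [← integral_add_right_eq_self
      (fun t => (Set.Ioi x).indicator (fun t => Real.exp (-t ^ 2 / 2)) t) x]
    congr 1
    funext s
    by_cases hs : s ∈ Set.Ioi (0:ℝ)
    · rw [Set.indicator_of_mem hs, Set.indicator_of_mem (by simpa using hs.out)]
    · rw [Set.indicator_of_notMem hs, Set.indicator_of_notMem]
      simp only [Set.mem_Ioi, not_lt] at hs ⊢
      linarith
  rw [millsRatio, h1, ← integral_const_mul]
  congr 1
  funext s
  rw [← Real.exp_add]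
  ring_nf

lemma millsRatio_pos (x : ℝ) : 0 < millsRatio x := by
  rw [millsRatio_eq]
  have := (integrable_aux x)
  rw [setIntegral_pos_iff_support_of_nonneg_ae
    (Filter.Eventually.of_forall fun s => (Real.exp_pos _).le) this]
  have : (Function.support fun s : ℝ => Real.exp (-(x * s) - s ^ 2 / 2)) = Set.univ := by
    ext s; simp [Function.mem_support, (Real.exp_pos _).ne']
  rw [this, Set.univ_inter]
  simp

lemma memLp_aux (x : ℝ) {a : ℝ} (ha : 0 < a) :
    MemLp (fun s : ℝ => Real.exp (a * (-(x * s) - s ^ 2 / 2))) (ENNReal.ofReal (1 / a))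
      (volume.restrict (Set.Ioi 0)) := by
  have hA : ENNReal.ofReal (1 / a) ≠ 0 := by
    simp [ENNReal.ofReal_eq_zero, not_le, one_div, ha]
  have hB : ENNReal.ofReal (1 / a) ≠ ⊤ := ENNReal.ofReal_ne_top
  rw [← memLp_norm_rpow_iff _ hA hB, ENNReal.toReal_ofReal (by positivity),
    ENNReal.div_self hA hB, memLp_one_iff_integrable]
  · apply (integrable_aux x).congr
    refine Filter.Eventually.of_forall fun s => ?_
    beta_reduce
    rw [Real.norm_of_nonneg (Real.exp_pos _).le, ← Real.exp_mul]
    congr 1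
    field_simp
  · exact (Real.continuous_exp.comp (by continuity)).aestronglyMeasurable

/-- The Mills ratio is log-convex: `x ↦ log R(x)` is convex on `ℝ`. -/
theorem millsRatio_logConvex :
    ConvexOn ℝ Set.univ fun x => Real.log (millsRatio x) := by
  refine convexOn_iff_forall_pos.mpr ⟨convex_univ, fun x _ y _ a b ha hb hab => ?_⟩
  simp only [smul_eq_mul]
  have key : millsRatio (a * x + b * y) ≤ millsRatio x ^ a * millsRatio y ^ b := by
    rw [millsRatio_eq, millsRatio_eq, millsRatio_eq]
    have e : Real.HolderConjugate (1 / a) (1 / b) := by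
      rw [Real.holderConjugate_iff]
      constructor
      · rw [lt_div_iff₀ ha, one_mul]; linarith
      · simp only [one_div, inv_inv]; linarith
    have := MeasureTheory.integral_mul_le_Lp_mul_Lq_of_nonneg e
      (f := fun s => Real.exp (a * (-(x * s) - s ^ 2 / 2)))
      (g := fun s => Real.exp (b * (-(y * s) - s ^ 2 / 2)))
      (Filter.Eventually.of_forall fun s => (Real.exp_pos _).le)
      (Filter.Eventually.of_forall fun s => (Real.exp_pos _).le)
      (memLp_aux x ha) (memLp_aux y hb)
    rw [one_div_one_div, one_div_one_div] at this
    calc (∫ s in Set.Ioi 0, Real.exp (-((a * x + b * y) * s) - s ^ 2 / 2))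
        = ∫ s in Set.Ioi 0, Real.exp (a * (-(x * s) - s ^ 2 / 2)) *
            Real.exp (b * (-(y * s) - s ^ 2 / 2)) := by
          congr 1; funext s; rw [← Real.exp_add]; congr 1; nlinarith [hab]
      _ ≤ (∫ s in Set.Ioi 0, Real.exp (a * (-(x * s) - s ^ 2 / 2)) ^ (1 / a)) ^ a *
            (∫ s in Set.Ioi 0, Real.exp (b * (-(y * s) - s ^ 2 / 2)) ^ (1 / b)) ^ b := this
      _ = (∫ s in Set.Ioi 0, Real.exp (-(x * s) - s ^ 2 / 2)) ^ a *
            (∫ s in Set.Ioi 0, Real.exp (-(y * s) - s ^ 2 / 2)) ^ b := by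
          have hgen : ∀ c z : ℝ, 0 < c →
              (∫ s in Set.Ioi 0, Real.exp (c * (-(z * s) - s ^ 2 / 2)) ^ (1 / c))
                = ∫ s in Set.Ioi 0, Real.exp (-(z * s) - s ^ 2 / 2) := by
            intro c z hc
            refine setIntegral_congr_fun measurableSet_Ioi fun s _ => ?_
            rw [← Real.exp_mul]
            congr 1
            field_simp
          rw [hgen a x ha, hgen b y hb]
  calc Real.log (millsRatio (a * x + b * y))
      ≤ Real.log (millsRatio x ^ a * millsRatio y ^ b) :=
        Real.log_le_log (millsRatio_pos _) key
    _ = a * Real.log (millsRatio x) + b * Real.log (millsRatio y) := by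
        rw [Real.log_mul (Real.rpow_pos_of_pos (millsRatio_pos _) _).ne' (Real.rpow_pos_of_pos (millsRatio_pos _) _).ne', Real.log_rpow (millsRatio_pos _),
          Real.log_rpow (millsRatio_pos _)]
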